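/- arXiv:2010.07128 — 4 statements merged into one kernel-verified Lean document; each statement's English description precedes it below -/
import Mathlib

section
/- If (x, y) is an orthogonal pair of Euler elements in sl₂(ℝ), i.e., x and y are nonzero Euler elements with y ∈ g₁(x) ⊕ g₋₁(x), then also x ∈ g₁(y) ⊕ g₋₁(y), so that (y, x) is an orthogonal pair as well. -/
/-- A nonzero element `h` of a real Lie algebra is an *Euler element* if `ad h` is
diagonalizable with eigenvalues in `{-1, 0, 1}`; over `ℝ` this is equivalent to the
polynomial identity `(ad h)^3 = ad h`. -/
def IsEuler {L : Type*} [LieRing L] [LieAlgebra ℝ L] (h : L) : Prop :=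
  h ≠ 0 ∧ ∀ y : L, ⁅h, ⁅h, ⁅h, y⁆⁆⁆ = ⁅h, y⁆

/-- For an Euler element `h`, an element `y` lies in `g₁(h) ⊕ g₋₁(h)` if and only if
`(ad h)² y = y` (since `ker ((ad h)² - 1) = g₁(h) ⊕ g₋₁(h)`). -/
def IsOrthogonalPair {L : Type*} [LieRing L] [LieAlgebra ℝ L] (h x : L) : Prop :=
  IsEuler h ∧ IsEuler x ∧ ⁅h, ⁅h, x⁆⁆ = x

open Matrix LieAlgebra.SpecialLinear in
set_option maxHeartbeats 1000000 in
/-- In `sl₂(ℝ)`, the square of an Euler element (viewed as a matrix) is `(1/4) • 1`. -/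
lemma sl2_euler_sq (x : LieAlgebra.SpecialLinear.sl (Fin 2) ℝ) (hne : x ≠ 0)
    (hx : ∀ y : LieAlgebra.SpecialLinear.sl (Fin 2) ℝ, ⁅x, ⁅x, ⁅x, y⁆⁆⁆ = ⁅x, y⁆) :
    (x : Matrix (Fin 2) (Fin 2) ℝ) * (x : Matrix (Fin 2) (Fin 2) ℝ)
      = (1/4 : ℝ) • (1 : Matrix (Fin 2) (Fin 2) ℝ) := by
  set M2 := Matrix (Fin 2) (Fin 2) ℝ
  have htr : (x : M2) 1 1 = - (x : M2) 0 0 := by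
    have h : Matrix.trace (x : M2) = 0 := x.2
    have h2 : (x : M2) 0 0 + (x : M2) 1 1 = 0 := by
      simpa [Matrix.trace, Fin.sum_univ_two] using h
    linarith
  have hEe := congrArg Subtype.val (hx (LieAlgebra.SpecialLinear.single 0 1 (by decide) (1:ℝ)))
  have hFe := congrArg Subtype.val (hx (LieAlgebra.SpecialLinear.single 1 0 (by decide) (1:ℝ)))
  simp only [LieSubalgebra.coe_bracket, Ring.lie_def, LieAlgebra.SpecialLinear.val_single] at hEe hFe
  have e1 := congrArg (fun m : M2 => m 0 0) hEe
  have e2 := congrArg (fun m : M2 => m 0 1) hEe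
  have e3 := congrArg (fun m : M2 => m 0 0) hFe
  simp only [Matrix.sub_apply, Matrix.mul_apply, Fin.sum_univ_two,
    Matrix.single_apply_same, Matrix.single_apply_of_ne,
    Matrix.single] at e1 e2 e3
  norm_num at e1 e2 e3
  rw [htr] at e1 e2 e3
  have f1 : (4 * ((x : M2) 0 0 ^ 2 + (x : M2) 0 1 * (x : M2) 1 0) - 1) * (x : M2) 1 0 = 0 := by
    linear_combination -e1
  have f2 : (4 * ((x : M2) 0 0 ^ 2 + (x : M2) 0 1 * (x : M2) 1 0) - 1) * (x : M2) 0 0 = 0 := by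
    linear_combination e2 / 2
  have f3 : (4 * ((x : M2) 0 0 ^ 2 + (x : M2) 0 1 * (x : M2) 1 0) - 1) * (x : M2) 0 1 = 0 := by
    linear_combination e3
  have hs : (x : M2) 0 0 ^ 2 + (x : M2) 0 1 * (x : M2) 1 0 = 1/4 := by
    by_contra hs
    have hne4 : (4 * ((x : M2) 0 0 ^ 2 + (x : M2) 0 1 * (x : M2) 1 0) - 1) ≠ 0 := by
      intro h; apply hs; linarith
    have ha : (x : M2) 0 0 = 0 := by
      rcases mul_eq_zero.mp f2 with h | h
      · exact absurd h hne4
      · exact h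
    have hb : (x : M2) 0 1 = 0 := by
      rcases mul_eq_zero.mp f3 with h | h
      · exact absurd h hne4
      · exact h
    have hc : (x : M2) 1 0 = 0 := by
      rcases mul_eq_zero.mp f1 with h | h
      · exact absurd h hne4
      · exact h
    apply hne
    apply Subtype.ext
    show (x : M2) = 0
    ext i j
    fin_cases i <;> fin_cases j <;> simp [ha, hb, hc, htr]
  ext i j
  fin_cases i <;> fin_cases j <;>
    simp [Matrix.mul_apply, Fin.sum_univ_two, Matrix.one_apply, htr] <;>
      nlinarith [hs]

open Matrix LieAlgebra.SpecialLinear in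
set_option maxHeartbeats 1000000 in
lemma sl2_double_bracket_symm
    (x y : LieAlgebra.SpecialLinear.sl (Fin 2) ℝ)
    (hne : x ≠ 0) (hyne : y ≠ 0)
    (hx : ∀ z : LieAlgebra.SpecialLinear.sl (Fin 2) ℝ, ⁅x, ⁅x, ⁅x, z⁆⁆⁆ = ⁅x, z⁆)
    (hy : ∀ z : LieAlgebra.SpecialLinear.sl (Fin 2) ℝ, ⁅y, ⁅y, ⁅y, z⁆⁆⁆ = ⁅y, z⁆)
    (horth : ⁅x, ⁅x, y⁆⁆ = y) : ⁅y, ⁅y, x⁆⁆ = x := by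
  set M2 := Matrix (Fin 2) (Fin 2) ℝ
  set X : M2 := (x : M2)
  set Y : M2 := (y : M2)
  have hX2 : X * X = (1/4 : ℝ) • (1 : M2) := sl2_euler_sq x hne hx
  have hY2 : Y * Y = (1/4 : ℝ) • (1 : M2) := sl2_euler_sq y hyne hy
  have e1 : X * (X * Y - Y * X) - (X * Y - Y * X) * X = Y := by
    have := congrArg Subtype.val horth
    simpa only [LieSubalgebra.coe_bracket, Ring.lie_def] using this
  have expand1 : X * (X * Y - Y * X) - (X * Y - Y * X) * X
      = X * X * Y - X * Y * X - X * Y * X + Y * (X * X) := by simp only [mul_sub, sub_mul, mul_assoc]; abel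
  rw [expand1] at e1
  rw [hX2] at e1
  simp only [smul_mul_assoc, mul_smul_comm, one_mul, mul_one] at e1
  have hXYX : X * Y * X = (-(1/4 : ℝ)) • Y := by
    linear_combination (norm := module) (-(1/2 : ℝ)) • e1
  have h4 : (X * X) * (Y * X) = (-(1/4 : ℝ)) • (X * Y) := by
    calc (X * X) * (Y * X) = X * (X * Y * X) := by noncomm_ring
    _ = X * ((-(1/4 : ℝ)) • Y) := by rw [hXYX]
    _ = (-(1/4 : ℝ)) • (X * Y) := by rw [mul_smul_comm]
  rw [hX2, smul_mul_assoc, one_mul] at h4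
  have hanti : Y * X = -(X * Y) := by
    have h5 := congrArg (fun m : M2 => (4:ℝ) • m) h4
    simpa [smul_smul] using h5
  have hYXY : Y * X * Y = (-(1/4 : ℝ)) • X := by
    rw [hanti, neg_mul, mul_assoc, hY2, mul_smul_comm, mul_one]
    module
  apply Subtype.ext
  show Y * (Y * X - X * Y) - (Y * X - X * Y) * Y = X
  have expand2 : Y * (Y * X - X * Y) - (Y * X - X * Y) * Y
      = (Y * Y) * X - Y * X * Y - Y * X * Y + X * (Y * Y) := by simp only [mul_sub, sub_mul, mul_assoc]; abel
  rw [expand2, hY2, hYXY]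
  simp only [smul_mul_assoc, mul_smul_comm, one_mul, mul_one]
  module

/-- If `(x, y)` is an orthogonal pair of Euler elements in `sl₂(ℝ)`
(i.e. `x, y` are nonzero Euler elements with `y ∈ g₁(x) ⊕ g₋₁(x)`), then also
`x ∈ g₁(y) ⊕ g₋₁(y)`, so `(y, x)` is an orthogonal pair as well. -/
theorem sl2_orthogonal_symm
    (x y : LieAlgebra.SpecialLinear.sl (Fin 2) ℝ)
    (hxy : IsOrthogonalPair x y) :
    IsOrthogonalPair y x := by
  obtain ⟨⟨hxne, hxE⟩, ⟨hyne, hyE⟩, horth⟩ := hxy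
  exact ⟨⟨hyne, hyE⟩, ⟨hxne, hxE⟩,
    sl2_double_bracket_symm x y hxne hyne hxE hyE horth⟩
end

section
/- Let V be a finite-dimensional real vector space, Σ ⊆ V* ∖ {0} a finite set, and Π = (α₁, …, αₙ) a family in Σ forming a basis of V* such that every α ∈ Σ is a linear combination of α₁, …, αₙ whose coefficients are either all nonnegative integers or all nonpositive integers. Suppose β = Σⱼ cⱼαⱼ ∈ Σ with cⱼ ≥ 1 for all j. Let h ∈ V satisfy α(h) ∈ {−1, 0, 1} for all α ∈ Σ and αⱼ(h) ∈ {0, 1} for all j, and assume h ≠ 0. Then there is exactly one index j with αⱼ(h) = 1 (so αₖ(h) = 0 for k ≠ j, i.e., h is the fundamental coweight hⱼ), and for this index cⱼ = 1. -/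
/-- Let `V` be a finite-dimensional real vector space, `Σ ⊆ V* \ {0}` a
finite set and `Π = (α₁, …, αₙ)` a family in `Σ` forming a basis of `V*` such that every
`α ∈ Σ` is an integral linear combination of the `αⱼ` with coefficients all `≥ 0` or all
`≤ 0`.  Suppose `β = Σⱼ cⱼ αⱼ ∈ Σ` with `cⱼ ≥ 1` for all `j`.  If `h ∈ V` is nonzero with
`α(h) ∈ {-1, 0, 1}` for all `α ∈ Σ` and `αⱼ(h) ∈ {0, 1}` for all `j`, then there is
exactly one index `j` with `αⱼ(h) = 1` (so `αₖ(h) = 0` for `k ≠ j`, i.e. `h` is the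
fundamental coweight `hⱼ`), and for this index `cⱼ = 1`. -/
theorem euler_element_is_fundamental_coweight
    {V : Type*} [AddCommGroup V] [Module ℝ V] [FiniteDimensional ℝ V]
    (roots : Set (Module.Dual ℝ V)) (hfin : roots.Finite)
    (h0 : (0 : Module.Dual ℝ V) ∉ roots)
    {n : ℕ} (α : Fin n → Module.Dual ℝ V)
    (hmem : ∀ j, α j ∈ roots)
    (hindep : LinearIndependent ℝ α)
    (hspan : Submodule.span ℝ (Set.range α) = ⊤)
    (hint : ∀ γ ∈ roots, ∃ m : Fin n → ℤ,
      γ = ∑ j, (m j : ℝ) • α j ∧ ((∀ j, 0 ≤ m j) ∨ (∀ j, m j ≤ 0)))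
    (β : Module.Dual ℝ V) (hβ : β ∈ roots)
    (c : Fin n → ℝ) (hβeq : β = ∑ j, c j • α j) (hc : ∀ j, 1 ≤ c j)
    (h : V) (hne : h ≠ 0)
    (hvals : ∀ γ ∈ roots, γ h ∈ ({-1, 0, 1} : Set ℝ))
    (hPi : ∀ j, α j h ∈ ({0, 1} : Set ℝ)) :
    ∃ j : Fin n, α j h = 1 ∧ c j = 1 ∧ ∀ k : Fin n, k ≠ j → α k h = 0 := by
  -- there is some j with α j h ≠ 0
  have hexists : ∃ j, α j h ≠ 0 := by
    by_contra hcon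
    push_neg at hcon
    apply hne
    have hall : ∀ f : Module.Dual ℝ V, f h = 0 := by
      intro f
      have hf : f ∈ Submodule.span ℝ (Set.range α) := by rw [hspan]; trivial
      induction hf using Submodule.span_induction with
      | mem x hx => obtain ⟨j, rfl⟩ := hx; exact hcon j
      | zero => simp
      | add x y _ _ hx hy => simp [hx, hy]
      | smul a x _ hx => simp [hx]
    exact (Module.forall_dual_apply_eq_zero_iff ℝ h).mp hall
  obtain ⟨j, hj⟩ := hexists
  have hj1 : α j h = 1 := by rcases hPi j with h' | h' <;> simp_all
  refine ⟨j, hj1, ?_⟩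
  have hterm : ∀ k, 0 ≤ c k * α k h := by
    intro k
    have hk := hPi k
    simp only [Set.mem_insert_iff, Set.mem_singleton_iff] at hk
    rcases hk with h' | h' <;> rw [h'] <;> nlinarith [hc k]
  have hβh : β h = ∑ k, c k * α k h := by
    rw [hβeq]; simp
  have hsum_ge : c j ≤ ∑ k, c k * α k h := by
    have := Finset.single_le_sum (f := fun k => c k * α k h)
      (fun k _ => hterm k) (Finset.mem_univ j)
    simpa only [hj1, mul_one] using this
  have hβle : β h ≤ 1 := by
    rcases hvals β hβ with h' | h' | h' <;> simp_all <;> linarith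
  have hcj1 : c j = 1 := le_antisymm (by rw [hβh] at hβle; linarith [hc j]) (hc j)
  refine ⟨hcj1, ?_⟩
  have hβ1 : β h = 1 := by
    rcases hvals β hβ with h' | h' | h' <;> simp_all <;> linarith [hc j]
  have hrest : ∑ k ∈ Finset.univ.erase j, c k * α k h = 0 := by
    have := Finset.add_sum_erase Finset.univ (fun k => c k * α k h) (Finset.mem_univ j)
    simp only [hj1, mul_one, hcj1] at this
    rw [hβh, ← this] at hβ1
    linarith
  intro k hk
  have hz : c k * α k h = 0 := by
    have := (Finset.sum_eq_zero_iff_of_nonneg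
      (fun i _ => hterm i)).mp hrest k (Finset.mem_erase.mpr ⟨hk, Finset.mem_univ k⟩)
    exact this
  rcases mul_eq_zero.mp hz with h' | h'
  · linarith [hc k]
  · exact h'
end

section
/- Let g be a finite-dimensional simple real Lie algebra and let (h, x) be an orthogonal pair of Euler elements, i.e., h and x are nonzero Euler elements with x ∈ g₁(h) ⊕ g₋₁(h). Then both h and x are symmetric: −h ∈ Inn(g)·h and −x ∈ Inn(g)·x. -/
/-- The exponential of an endomorphism of a finite-dimensional real vector space,
computed via the entrywise exponential power series in a chosen basis (the result is
independent of this choice, since `exp` commutes with conjugation). -/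
noncomputable def endExp {L : Type*} [AddCommGroup L] [Module ℝ L] [FiniteDimensional ℝ L]
    (f : Module.End ℝ L) : Module.End ℝ L :=
  letI := Classical.decEq (Module.Basis.ofVectorSpaceIndex ℝ L)
  Matrix.toLin (Module.Basis.ofVectorSpace ℝ L) (Module.Basis.ofVectorSpace ℝ L)
    (NormedSpace.exp
      (LinearMap.toMatrix (Module.Basis.ofVectorSpace ℝ L) (Module.Basis.ofVectorSpace ℝ L) f))

/-- `x` is conjugate to `z` under the group of inner automorphisms generated by the
operators `exp (ad y)` with `y` ranging over the set `S`. -/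
def InnConjIn {L : Type*} [LieRing L] [LieAlgebra ℝ L] [FiniteDimensional ℝ L]
    (S : Set L) (x z : L) : Prop :=
  ∃ l : List L, (∀ y ∈ l, y ∈ S) ∧
    ((l.map fun y => endExp (LieAlgebra.ad ℝ L y)).prod) x = z

/-- `x` is conjugate to `z` under `Inn(L) = ⟨exp (ad y) : y ∈ L⟩`. -/
def InnConj {L : Type*} [LieRing L] [LieAlgebra ℝ L] [FiniteDimensional ℝ L]
    (x z : L) : Prop :=
  ∃ l : List L, ((l.map fun y => endExp (LieAlgebra.ad ℝ L y)).prod) x = z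

/-- A Levi complement: a semisimple Lie subalgebra which is a vector-space complement
to the solvable radical. -/
def IsLeviComplement {L : Type*} [LieRing L] [LieAlgebra ℝ L] [FiniteDimensional ℝ L]
    (s : LieSubalgebra ℝ L) : Prop :=
  LieAlgebra.IsSemisimple ℝ s ∧
    IsCompl (LieAlgebra.radical ℝ L).toSubmodule s.toSubmodule

section AuxLemmas

open LieAlgebra

variable {L : Type*} [LieRing L] [LieAlgebra ℝ L]

/-- If `ad t` satisfies `(ad t)³ = ad t` then any `c`-eigenvector with `c³ ≠ c` vanishes. -/
private lemma cube_eig_zero (t : L) (ht : ∀ y : L, ⁅t, ⁅t, ⁅t, y⁆⁆⁆ = ⁅t, y⁆)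
    {w : L} {c : ℝ} (hc : c ^ 3 - c ≠ 0) (hw : ⁅t, w⁆ = c • w) : w = 0 := by
  have h1 : ⁅t, ⁅t, ⁅t, w⁆⁆⁆ = (c ^ 3) • w := by
    simp only [hw, lie_smul, smul_smul]
    module
  have h2 : (c ^ 3 - c) • w = 0 := by
    rw [sub_smul, ← h1, ht w, hw, sub_self]
  rcases smul_eq_zero.mp h2 with h | h
  · exact absurd h hc
  · exact h

/-- An `h`-eigenvector of eigenvalue `c` is sent by `ad y`, `y ∈ g₁(h)`, to an
eigenvector of eigenvalue `c + 1`. -/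
private lemma eig_step (t y : L) (hy : ⁅t, y⁆ = y) {w : L} {c : ℝ} (hw : ⁅t, w⁆ = c • w) :
    ⁅t, ⁅y, w⁆⁆ = (c + 1) • ⁅y, w⁆ := by
  rw [leibniz_lie, hy, hw, lie_smul, add_smul, one_smul, add_comm]

private lemma eig_step' (t y : L) (hy : ⁅t, y⁆ = -y) {w : L} {c : ℝ} (hw : ⁅t, w⁆ = c • w) :
    ⁅t, ⁅y, w⁆⁆ = (c - 1) • ⁅y, w⁆ := by
  rw [leibniz_lie, hy, hw, lie_smul, sub_smul, one_smul, neg_lie, sub_eq_add_neg, add_comm]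

/-- If `(ad t)³ = ad t` and `y ∈ g₁(t)` then `(ad y)³ = 0`. -/
private lemma nil3_pos (t y : L) (ht : ∀ v : L, ⁅t, ⁅t, ⁅t, v⁆⁆⁆ = ⁅t, v⁆)
    (hy : ⁅t, y⁆ = y) : ∀ v : L, ⁅y, ⁅y, ⁅y, v⁆⁆⁆ = 0 := by
  have kill : ∀ w : L, ⁅t, w⁆ = (2 : ℝ) • w → w = 0 := by
    intro w hw
    exact cube_eig_zero t ht (c := 2) (by norm_num) hw
  have killup : ∀ (w : L) (c : ℝ), c = 1 → ⁅t, w⁆ = c • w → ⁅y, w⁆ = 0 := by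
    intro w c hc hw
    exact kill _ (by rw [eig_step t y hy hw, hc]; norm_num)
  intro v
  set a : L := (2⁻¹ : ℝ) • (⁅t, ⁅t, v⁆⁆ - ⁅t, v⁆) with ha_def
  set b : L := v - ⁅t, ⁅t, v⁆⁆ with hb_def
  set c : L := (2⁻¹ : ℝ) • (⁅t, ⁅t, v⁆⁆ + ⁅t, v⁆) with hc_def
  have hva : ⁅t, a⁆ = (-1 : ℝ) • a := by
    rw [ha_def, lie_smul, lie_sub, ht v]; module
  have hvb : ⁅t, b⁆ = (0 : ℝ) • b := by
    rw [hb_def, lie_sub, ht v]; module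
  have hvc : ⁅t, c⁆ = (1 : ℝ) • c := by
    rw [hc_def, lie_smul, lie_add, ht v]; module
  have hsum : v = a + b + c := by rw [ha_def, hb_def, hc_def]; module
  have hc0 : ⁅y, ⁅y, ⁅y, c⁆⁆⁆ = 0 := by
    rw [killup c 1 rfl hvc, lie_zero, lie_zero]
  have hb0 : ⁅y, ⁅y, ⁅y, b⁆⁆⁆ = 0 := by
    rw [killup ⁅y, b⁆ (0 + 1) (by norm_num) (eig_step t y hy hvb), lie_zero]
  have ha0 : ⁅y, ⁅y, ⁅y, a⁆⁆⁆ = 0 := by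
    exact killup ⁅y, ⁅y, a⁆⁆ (-1 + 1 + 1) (by norm_num) (eig_step t y hy (eig_step t y hy hva))
  rw [hsum]
  simp only [lie_add, ha0, hb0, hc0, add_zero, zero_add]

/-- If `(ad t)³ = ad t` and `y ∈ g₋₁(t)` then `(ad y)³ = 0`. -/
private lemma nil3_neg (t y : L) (ht : ∀ v : L, ⁅t, ⁅t, ⁅t, v⁆⁆⁆ = ⁅t, v⁆)
    (hy : ⁅t, y⁆ = -y) : ∀ v : L, ⁅y, ⁅y, ⁅y, v⁆⁆⁆ = 0 := by
  have kill : ∀ w : L, ⁅t, w⁆ = (-2 : ℝ) • w → w = 0 := by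
    intro w hw
    exact cube_eig_zero t ht (c := -2) (by norm_num) hw
  have killup : ∀ (w : L) (c : ℝ), c = -1 → ⁅t, w⁆ = c • w → ⁅y, w⁆ = 0 := by
    intro w c hc hw
    exact kill _ (by rw [eig_step' t y hy hw, hc]; norm_num)
  intro v
  set a : L := (2⁻¹ : ℝ) • (⁅t, ⁅t, v⁆⁆ - ⁅t, v⁆) with ha_def
  set b : L := v - ⁅t, ⁅t, v⁆⁆ with hb_def
  set c : L := (2⁻¹ : ℝ) • (⁅t, ⁅t, v⁆⁆ + ⁅t, v⁆) with hc_def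
  have hva : ⁅t, a⁆ = (-1 : ℝ) • a := by
    rw [ha_def, lie_smul, lie_sub, ht v]; module
  have hvb : ⁅t, b⁆ = (0 : ℝ) • b := by
    rw [hb_def, lie_sub, ht v]; module
  have hvc : ⁅t, c⁆ = (1 : ℝ) • c := by
    rw [hc_def, lie_smul, lie_add, ht v]; module
  have hsum : v = a + b + c := by rw [ha_def, hb_def, hc_def]; module
  have ha0 : ⁅y, ⁅y, ⁅y, a⁆⁆⁆ = 0 := by
    rw [killup a (-1) rfl hva, lie_zero, lie_zero]
  have hb0 : ⁅y, ⁅y, ⁅y, b⁆⁆⁆ = 0 := by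
    rw [killup ⁅y, b⁆ (0 - 1) (by norm_num) (eig_step' t y hy hvb), lie_zero]
  have hc0 : ⁅y, ⁅y, ⁅y, c⁆⁆⁆ = 0 := by
    exact killup ⁅y, ⁅y, c⁆⁆ (1 - 1 - 1) (by norm_num) (eig_step' t y hy (eig_step' t y hy hvc))
  rw [hsum]
  simp only [lie_add, ha0, hb0, hc0, add_zero, zero_add]

variable [FiniteDimensional ℝ L]

private lemma toLin_exp_of_cube_zero {ι : Type*} [Fintype ι] [DecidableEq ι]
    (b : Module.Basis ι ℝ L) (f : Module.End ℝ L) (hf : f * f * f = 0) :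
    Matrix.toLin b b (NormedSpace.exp (LinearMap.toMatrix b b f)) =
      1 + f + (2⁻¹ : ℝ) • (f * f) := by
  set M := LinearMap.toMatrix b b f with hM
  have hf3 : f ^ 3 = 0 := by rw [pow_succ, pow_two, hf]
  have hpow : ∀ n : ℕ, 3 ≤ n → M ^ n = 0 := by
    intro n hn
    obtain ⟨k, rfl⟩ := Nat.exists_eq_add_of_le hn
    rw [hM, LinearMap.toMatrix_pow, pow_add, hf3, zero_mul, map_zero]
  have hzero : ∀ n ∉ Finset.range 3, ((Nat.factorial n : ℝ)⁻¹) • M ^ n = (0 : Matrix ι ι ℝ) := by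
    intro n hn
    rw [hpow n (by simpa using hn), smul_zero]
  have hexp : NormedSpace.exp M = 1 + M + (2⁻¹ : ℝ) • (M * M) := by
    simp only [NormedSpace.exp_eq_tsum (𝕂 := ℝ)]
    rw [(hasSum_sum_of_ne_finset_zero hzero).tsum_eq]
    rw [Finset.sum_range_succ, Finset.sum_range_succ, Finset.sum_range_succ,
      Finset.sum_range_zero, zero_add, pow_zero, pow_one, pow_two]
    norm_num [Nat.factorial]
  have h1 : (1 : Matrix ι ι ℝ) + M + (2⁻¹ : ℝ) • (M * M) =
      LinearMap.toMatrix b b (1 + f + (2⁻¹ : ℝ) • (f * f)) := by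
    rw [map_add, map_add, map_smul, LinearMap.toMatrix_one, LinearMap.toMatrix_mul, hM]
  rw [hexp, h1, Matrix.toLin_toMatrix]

/-- `endExp` of an endomorphism whose cube vanishes is `1 + f + f²/2`. -/
private lemma endExp_of_cube_zero (f : Module.End ℝ L) (hf : f * f * f = 0) :
    endExp f = 1 + f + (2⁻¹ : ℝ) • (f * f) := by
  unfold endExp
  letI := Classical.decEq (Module.Basis.ofVectorSpaceIndex ℝ L)
  exact toLin_exp_of_cube_zero (Module.Basis.ofVectorSpace ℝ L) f hf

private lemma endExp_apply (y : L) (h3 : ∀ v : L, ⁅y, ⁅y, ⁅y, v⁆⁆⁆ = 0) (v : L) :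
    endExp (ad ℝ L y) v = v + ⁅y, v⁆ + (2⁻¹ : ℝ) • ⁅y, ⁅y, v⁆⁆ := by
  have hc : ad ℝ L y * ad ℝ L y * ad ℝ L y = 0 := by
    ext w
    simpa only [Module.End.mul_apply, ad_apply, LinearMap.zero_apply] using h3 w
  rw [endExp_of_cube_zero _ hc]
  simp [Module.End.mul_apply, ad_apply]

/-- `endExp (ad y)` is multiplicative for brackets when `(ad y)³ = 0`. -/
private lemma endExp_lie (y : L) (h3 : ∀ v : L, ⁅y, ⁅y, ⁅y, v⁆⁆⁆ = 0) (u v : L) :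
    endExp (ad ℝ L y) ⁅u, v⁆ = ⁅endExp (ad ℝ L y) u, endExp (ad ℝ L y) v⁆ := by
  rw [endExp_apply y h3, endExp_apply y h3, endExp_apply y h3]
  set u1 : L := ⁅y, u⁆ with hu1
  set u2 : L := ⁅y, u1⁆ with hu2
  set v1 : L := ⁅y, v⁆ with hv1
  set v2 : L := ⁅y, v1⁆ with hv2
  have hu3 : ⁅y, u2⁆ = 0 := h3 u
  have hv3 : ⁅y, v2⁆ = 0 := h3 v
  have d1 : ⁅y, ⁅u, v⁆⁆ = ⁅u1, v⁆ + ⁅u, v1⁆ := leibniz_lie y u v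
  have d2 : ⁅y, ⁅y, ⁅u, v⁆⁆⁆ = ⁅u2, v⁆ + ⁅u1, v1⁆ + ⁅u1, v1⁆ + ⁅u, v2⁆ := by
    rw [d1, lie_add, leibniz_lie y u1 v, leibniz_lie y u v1]
    abel
  have d3 : ⁅y, ⁅y, ⁅y, ⁅u, v⁆⁆⁆⁆ =
      (⁅u2, v1⁆ + ⁅u1, v2⁆) + (⁅u2, v1⁆ + ⁅u1, v2⁆) + (⁅u2, v1⁆ + ⁅u1, v2⁆) := by
    rw [d2]
    rw [lie_add, lie_add, lie_add, leibniz_lie y u2 v, leibniz_lie y u1 v1,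
      leibniz_lie y u v2, hu3, hv3, zero_lie, lie_zero, ← hu1, ← hv1, ← hu2, ← hv2]
    abel
  have S3 : ⁅u2, v1⁆ + ⁅u1, v2⁆ = 0 := by
    have h0 := h3 ⁅u, v⁆
    rw [d3] at h0
    have h0' : (3 : ℝ) • (⁅u2, v1⁆ + ⁅u1, v2⁆) = 0 := by
      rw [show (3 : ℝ) • (⁅u2, v1⁆ + ⁅u1, v2⁆) =
        (⁅u2, v1⁆ + ⁅u1, v2⁆) + (⁅u2, v1⁆ + ⁅u1, v2⁆) + (⁅u2, v1⁆ + ⁅u1, v2⁆) by module]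
      exact h0
    rcases smul_eq_zero.mp h0' with h | h
    · norm_num at h
    · exact h
  have S4 : ⁅u2, v2⁆ = 0 := by
    have h0 : ⁅y, ⁅u2, v1⁆ + ⁅u1, v2⁆⁆ = 0 := by rw [S3, lie_zero]
    rw [lie_add, leibniz_lie y u2 v1, leibniz_lie y u1 v2, hu3, hv3, zero_lie, lie_zero,
      ← hu2, ← hv2] at h0
    have h0' : (2 : ℝ) • ⁅u2, v2⁆ = 0 := by
      rw [show (2 : ℝ) • ⁅u2, v2⁆ = 0 + ⁅u2, v2⁆ + (⁅u2, v2⁆ + 0) by module]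
      exact h0
    rcases smul_eq_zero.mp h0' with h | h
    · norm_num at h
    · exact h
  have hvu : ⁅u2, v1⁆ = -⁅u1, v2⁆ := by
    rw [eq_neg_iff_add_eq_zero]; exact S3
  rw [d2, d1]
  simp only [lie_add, add_lie, lie_smul, smul_lie, hvu, S4]
  module

/-- `endExp (ad y) ∘ endExp (ad (-y)) = id` when `(ad y)³ = 0`. -/
private lemma endExp_neg_cancel (y : L) (h3 : ∀ v : L, ⁅y, ⁅y, ⁅y, v⁆⁆⁆ = 0) (v : L) :
    endExp (ad ℝ L y) (endExp (ad ℝ L (-y)) v) = v := by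
  have h3' : ∀ v : L, ⁅-y, ⁅-y, ⁅-y, v⁆⁆⁆ = 0 := by
    intro w
    simp only [neg_lie, lie_neg, neg_neg, h3 w, neg_zero]
  rw [endExp_apply (-y) h3' v, endExp_apply y h3]
  simp only [neg_lie, lie_neg, lie_add, lie_sub, lie_smul, neg_neg, h3 v, lie_zero,
    smul_zero, neg_zero]
  module

/-- Splitting a vector into eigencomponents of an endomorphism `T` with `T³ = T`,
within a `T`-invariant submodule `W`. -/
private lemma split3 (T : Module.End ℝ L) (hT : ∀ u : L, T (T (T u)) = T u)
    (W : Submodule ℝ L) (hW : ∀ u ∈ W, T u ∈ W) {v : L} (hv : v ∈ W) :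
    ∃ a ∈ W, ∃ b ∈ W, ∃ c ∈ W, v = a + b + c ∧
      T a = (-1 : ℝ) • a ∧ T b = 0 ∧ T c = (1 : ℝ) • c := by
  refine ⟨(2⁻¹ : ℝ) • (T (T v) - T v), ?_, v - T (T v), ?_,
    (2⁻¹ : ℝ) • (T (T v) + T v), ?_, ?_, ?_, ?_, ?_⟩
  · exact W.smul_mem _ (W.sub_mem (hW _ (hW _ hv)) (hW _ hv))
  · exact W.sub_mem hv (hW _ (hW _ hv))
  · exact W.smul_mem _ (W.add_mem (hW _ (hW _ hv)) (hW _ hv))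
  · module
  · rw [map_smul, map_sub, hT v]; module
  · rw [map_sub, hT v]; module
  · rw [map_smul, map_add, hT v]; module

/-- The Casimir-type operator commutation, in an arbitrary `ℝ`-algebra. -/
private lemma casimir_comm {A : Type*} [Ring A] [Algebra ℝ A] (e f q : A)
    (hef : e * f = f * e + (2 : ℝ) • q) (hqe : q * e = e * q + e) (hqf : q * f = f * q - f) :
    ((e * f + f * e + (2 : ℝ) • (q * q)) * e = e * (e * f + f * e + (2 : ℝ) • (q * q))) ∧
    ((e * f + f * e + (2 : ℝ) • (q * q)) * f = f * (e * f + f * e + (2 : ℝ) • (q * q))) ∧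
    ((e * f + f * e + (2 : ℝ) • (q * q)) * q = q * (e * f + f * e + (2 : ℝ) • (q * q))) := by
  have hfe : f * e = e * f - (2 : ℝ) • q := by rw [hef]; abel
  have r1 : ∀ X : A, f * (e * X) = e * (f * X) - (2 : ℝ) • (q * X) := by
    intro X
    rw [← mul_assoc, hfe, sub_mul, mul_assoc, smul_mul_assoc]
  have r2 : ∀ X : A, q * (e * X) = e * (q * X) + e * X := by
    intro X
    rw [← mul_assoc, hqe, add_mul, mul_assoc]
  have r3 : ∀ X : A, q * (f * X) = f * (q * X) - f * X := by
    intro X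
    rw [← mul_assoc, hqf, sub_mul, mul_assoc]
  refine ⟨?_, ?_, ?_⟩ <;>
  · simp only [add_mul, sub_mul, smul_mul_assoc, mul_add, mul_sub, mul_smul_comm, smul_add, smul_sub,
      mul_assoc, hfe, hqe, hqf, r1, r2, r3]
    module

end AuxLemmas

open LieAlgebra in
/-- In a finite-dimensional simple real Lie algebra, if `(h, x)` is an
orthogonal pair of Euler elements, then both `h` and `x` are symmetric:
`-h ∈ Inn(g)·h` and `-x ∈ Inn(g)·x`. -/
theorem orthogonal_pair_symmetric
    {L : Type*} [LieRing L] [LieAlgebra ℝ L] [FiniteDimensional ℝ L]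
    [LieAlgebra.IsSimple ℝ L]
    (h x : L) (hpair : IsOrthogonalPair h x) :
    InnConj h (-h) ∧ InnConj x (-x) := by
  obtain ⟨⟨hne, Hh⟩, ⟨xne, Hx⟩, Hox⟩ := hpair
  have skew : ∀ a b : L, ⁅a, b⁆ = -⁅b, a⁆ := fun a b => (lie_skew a b).symm
  set z : L := ⁅h, x⁆ with hz_def
  set hp : L := ⁅x, ⁅x, h⁆⁆ with hp_def
  -- basic bracket identities
  have bhz : ⁅h, z⁆ = x := Hox
  have bxh : ⁅x, h⁆ = -z := by rw [hz_def]; exact skew x h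
  have bxz : ⁅x, z⁆ = -hp := by rw [hp_def, bxh, lie_neg, neg_neg]
  have bzx : ⁅z, x⁆ = hp := by rw [skew z x, bxz, neg_neg]
  have bhpx : ⁅hp, x⁆ = z := by
    have h1 := Hx h
    rw [← hp_def, bxh] at h1
    rw [skew hp x, h1, neg_neg]
  have bhhp : ⁅h, hp⁆ = 0 := by
    have j := leibniz_lie h x z
    rw [bxz, bhz, ← hz_def, lie_self, lie_self, add_zero, lie_neg, neg_eq_zero] at j
    exact j
  have bh0x : ⁅h - hp, x⁆ = 0 := by
    rw [sub_lie, bhpx, ← hz_def, sub_self]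
  have bh0z : ⁅h - hp, z⁆ = 0 := by
    have j := leibniz_lie (h - hp) h x
    rw [← hz_def] at j
    have e1 : ⁅h - hp, h⁆ = 0 := by
      rw [sub_lie, lie_self, skew hp h, bhhp, neg_zero, sub_zero]
    rw [e1, zero_lie, bh0x, lie_zero, add_zero] at j
    exact j
  have bhpz : ⁅hp, z⁆ = x := by
    have hsub : ⁅h - hp, z⁆ = ⁅h, z⁆ - ⁅hp, z⁆ := sub_lie h hp z
    rw [bh0z, bhz] at hsub
    linear_combination (norm := module) hsub
  set E : L := x + z with hE_def
  set F : L := x - z with hF_def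
  have bhE : ⁅h, E⁆ = E := by rw [hE_def, lie_add, bhz, ← hz_def]; abel
  have bhF : ⁅h, F⁆ = -F := by rw [hF_def, lie_sub, bhz, ← hz_def]; abel
  have bhpE : ⁅hp, E⁆ = E := by rw [hE_def, lie_add, bhpx, bhpz]; abel
  have bhpF : ⁅hp, F⁆ = -F := by rw [hF_def, lie_sub, bhpx, bhpz]; abel
  have bh0E : ⁅h - hp, E⁆ = 0 := by rw [hE_def, lie_add, bh0x, bh0z, add_zero]
  have bh0F : ⁅h - hp, F⁆ = 0 := by rw [hF_def, lie_sub, bh0x, bh0z, sub_zero]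
  have bh0hp : ⁅h - hp, hp⁆ = 0 := by rw [sub_lie, bhhp, lie_self, zero_sub, neg_zero]
  have bEF : ⁅E, F⁆ = (2 : ℝ) • hp := by
    rw [hE_def, hF_def, add_lie, lie_sub, lie_sub, lie_self, bxz, bzx, lie_self]
    module
  have bEx : ⁅E, x⁆ = hp := by rw [hE_def, add_lie, lie_self, bzx, zero_add]
  have bFx : ⁅F, x⁆ = -hp := by rw [hF_def, sub_lie, lie_self, bzx, zero_sub]
  have bEhp : ⁅E, hp⁆ = -E := by rw [skew E hp, bhpE]
  have bFhp : ⁅F, hp⁆ = F := by rw [skew F hp, bhpF, neg_neg]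
  have bEh : ⁅E, h⁆ = -E := by rw [skew E h, bhE]
  have bFh : ⁅F, h⁆ = F := by rw [skew F h, bhF, neg_neg]
  have hpne : hp ≠ 0 := by
    intro h0
    rw [h0, zero_lie] at bhpx
    rw [← bhpx, lie_zero] at bhz
    exact xne bhz.symm
  have Ene : E ≠ 0 := by
    intro h0
    rw [h0, zero_lie] at bEF
    exact hpne ((smul_eq_zero.mp bEF.symm).resolve_left (by norm_num))
  -- nilpotency of the relevant adjoint operators
  have hE3 : ∀ v : L, ⁅E, ⁅E, ⁅E, v⁆⁆⁆ = 0 := nil3_pos h E Hh bhE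
  have hF3 : ∀ v : L, ⁅F, ⁅F, ⁅F, v⁆⁆⁆ = 0 := nil3_neg h F Hh bhF
  have hnF3 : ∀ v : L, ⁅-F, ⁅-F, ⁅-F, v⁆⁆⁆ = 0 :=
    nil3_neg h (-F) Hh (by rw [lie_neg, bhF, neg_neg])
  have hnE2 : ∀ v : L, ⁅-((2⁻¹ : ℝ) • E), ⁅-((2⁻¹ : ℝ) • E), ⁅-((2⁻¹ : ℝ) • E), v⁆⁆⁆ = 0 :=
    nil3_pos h (-((2⁻¹ : ℝ) • E)) Hh (by rw [lie_neg, lie_smul, bhE])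
  -- the inner automorphism ψ = g2 ∘ g1 with ψ(x) = -hp
  have step1 : endExp (ad ℝ L F) x = x - hp - (2⁻¹ : ℝ) • F := by
    rw [endExp_apply F hF3, bFx, lie_neg, bFhp]
    module
  have step2 : endExp (ad ℝ L (-((2⁻¹ : ℝ) • E))) (x - hp - (2⁻¹ : ℝ) • F) = -hp := by
    rw [endExp_apply _ hnE2]
    have c1 : ⁅-((2⁻¹ : ℝ) • E), x - hp - (2⁻¹ : ℝ) • F⁆ = -((2⁻¹ : ℝ) • E) := by
      rw [neg_lie, smul_lie, lie_sub, lie_sub, lie_smul, bEx, bEhp, bEF]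
      module
    rw [c1, lie_self, smul_zero, add_zero, hE_def, hF_def]
    module
  have hcan1 : ∀ w : L, endExp (ad ℝ L F) (endExp (ad ℝ L (-F)) w) = w :=
    endExp_neg_cancel F hF3
  have hcan2 : ∀ w : L,
      endExp (ad ℝ L (-((2⁻¹ : ℝ) • E))) (endExp (ad ℝ L ((2⁻¹ : ℝ) • E)) w) = w := by
    intro w
    have hy := endExp_neg_cancel (-((2⁻¹ : ℝ) • E)) hnE2 w
    rw [neg_neg] at hy
    exact hy
  have key : ∀ u : L,
      ⁅hp, endExp (ad ℝ L (-((2⁻¹ : ℝ) • E))) (endExp (ad ℝ L F) u)⁆ =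
        -(endExp (ad ℝ L (-((2⁻¹ : ℝ) • E))) (endExp (ad ℝ L F) ⁅x, u⁆)) := by
    intro u
    have l1 : endExp (ad ℝ L F) ⁅x, u⁆ =
        ⁅endExp (ad ℝ L F) x, endExp (ad ℝ L F) u⁆ := endExp_lie F hF3 x u
    have l2 := endExp_lie (-((2⁻¹ : ℝ) • E)) hnE2 (endExp (ad ℝ L F) x) (endExp (ad ℝ L F) u)
    have l3 : endExp (ad ℝ L (-((2⁻¹ : ℝ) • E))) (endExp (ad ℝ L F) x) = -hp := by
      rw [step1]; exact step2
    rw [l1, l2, l3, neg_lie, neg_neg]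
  have hq3 : ∀ w : L, ⁅hp, ⁅hp, ⁅hp, w⁆⁆⁆ = ⁅hp, w⁆ := by
    intro w
    set u : L := endExp (ad ℝ L (-F)) (endExp (ad ℝ L ((2⁻¹ : ℝ) • E)) w) with hu_def
    have hw : endExp (ad ℝ L (-((2⁻¹ : ℝ) • E))) (endExp (ad ℝ L F) u) = w := by
      rw [hu_def, hcan1, hcan2]
    have k1 : ⁅hp, w⁆ = -(endExp (ad ℝ L (-((2⁻¹ : ℝ) • E))) (endExp (ad ℝ L F) ⁅x, u⁆)) := by
      rw [← hw, key]
    have k2 : ⁅hp, ⁅hp, w⁆⁆ =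
        endExp (ad ℝ L (-((2⁻¹ : ℝ) • E))) (endExp (ad ℝ L F) ⁅x, ⁅x, u⁆⁆) := by
      rw [k1, lie_neg, key, neg_neg]
    have k3 : ⁅hp, ⁅hp, ⁅hp, w⁆⁆⁆ =
        -(endExp (ad ℝ L (-((2⁻¹ : ℝ) • E))) (endExp (ad ℝ L F) ⁅x, ⁅x, ⁅x, u⁆⁆⁆)) := by
      rw [k2, key]
    rw [k3, Hx u]
    exact k1.symm
  -- kill lemmas
  have killA2 : ∀ w : L, ⁅h, w⁆ = (2 : ℝ) • w → w = 0 :=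
    fun w hw => cube_eig_zero h Hh (by norm_num) hw
  have killAm2 : ∀ w : L, ⁅h, w⁆ = (-2 : ℝ) • w → w = 0 :=
    fun w hw => cube_eig_zero h Hh (by norm_num) hw
  have killq2 : ∀ w : L, ⁅hp, w⁆ = (2 : ℝ) • w → w = 0 :=
    fun w hw => cube_eig_zero hp hq3 (by norm_num) hw
  have killqm2 : ∀ w : L, ⁅hp, w⁆ = (-2 : ℝ) • w → w = 0 :=
    fun w hw => cube_eig_zero hp hq3 (by norm_num) hw
  -- eigenvector production
  have hup : ∀ u : L, ⁅h, u⁆ = u → ⁅E, u⁆ = 0 := by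
    intro u hu
    apply killA2
    have hs := eig_step h E bhE (c := 1) (by rw [one_smul]; exact hu)
    rw [hs, show (1 : ℝ) + 1 = 2 by norm_num]
  have hdn : ∀ u : L, ⁅h, u⁆ = -u → ⁅F, u⁆ = 0 := by
    intro u hu
    apply killAm2
    have hs := eig_step' h F bhF (c := -1) (by rw [neg_smul, one_smul]; exact hu)
    rw [hs, show (-1 : ℝ) - 1 = -2 by norm_num]
  have lemQ1 : ∀ w : L, ⁅hp, w⁆ = w → ⁅E, w⁆ = 0 := by
    intro w hw
    apply killq2
    have hs := eig_step hp E bhpE (c := 1) (by rw [one_smul]; exact hw)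
    rw [hs, show (1 : ℝ) + 1 = 2 by norm_num]
  have lemQm1 : ∀ w : L, ⁅hp, w⁆ = -w → ⁅F, w⁆ = 0 := by
    intro w hw
    apply killqm2
    have hs := eig_step' hp F bhpF (c := -1) (by rw [neg_smul, one_smul]; exact hw)
    rw [hs, show (-1 : ℝ) - 1 = -2 by norm_num]
  have comEF : ∀ w : L, ⁅E, ⁅F, w⁆⁆ = ⁅F, ⁅E, w⁆⁆ + (2 : ℝ) • ⁅hp, w⁆ := by
    intro w
    have j := leibniz_lie E F w
    rw [bEF, smul_lie] at j
    rw [j]; abel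
  have lemEF1 : ∀ w : L, ⁅hp, w⁆ = w → ⁅E, ⁅F, w⁆⁆ = (2 : ℝ) • w := by
    intro w hw
    rw [comEF w, lemQ1 w hw, lie_zero, zero_add, hw]
  have lemFEm1 : ∀ w : L, ⁅hp, w⁆ = -w → ⁅F, ⁅E, w⁆⁆ = (2 : ℝ) • w := by
    intro w hw
    have h1 := comEF w
    rw [lemQm1 w hw, lie_zero, hw] at h1
    linear_combination (norm := module) -h1
  -- the operators
  set eE : Module.End ℝ L := ad ℝ L E with heE
  set fF : Module.End ℝ L := ad ℝ L F with hfF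
  set qQ : Module.End ℝ L := ad ℝ L hp with hqQ
  set AH : Module.End ℝ L := ad ℝ L h with hAH
  set dD : Module.End ℝ L := ad ℝ L (h - hp) with hdD
  have adlie : ∀ a b : L, ad ℝ L ⁅a, b⁆ = ad ℝ L a * ad ℝ L b - ad ℝ L b * ad ℝ L a := by
    intro a b
    ext w
    simp only [ad_apply, Module.End.mul_apply, LinearMap.sub_apply, lie_lie]
  have adzero : ad ℝ L (0 : L) = 0 := by
    ext w
    simp only [ad_apply, zero_lie, LinearMap.zero_apply]
  have hq3' : ∀ u : L, qQ (qQ (qQ u)) = qQ u := by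
    intro u; simp only [hqQ, ad_apply]; exact hq3 u
  have hA3' : ∀ u : L, AH (AH (AH u)) = AH u := by
    intro u; simp only [hAH, ad_apply]; exact Hh u
  have Ref : eE * fF = fF * eE + (2 : ℝ) • qQ := by
    have h1 := adlie E F
    rw [bEF] at h1
    have h2 : ad ℝ L ((2 : ℝ) • hp) = (2 : ℝ) • qQ := by
      ext w
      simp only [ad_apply, LinearMap.smul_apply, smul_lie, hqQ]
    rw [h2, ← heE, ← hfF] at h1
    exact sub_eq_iff_eq_add'.mp h1.symm
  have Rqe : qQ * eE = eE * qQ + eE := by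
    have h1 := adlie hp E
    rw [bhpE, ← heE, ← hqQ] at h1
    exact sub_eq_iff_eq_add'.mp h1.symm
  have Rqf : qQ * fF = fF * qQ - fF := by
    have h1 := adlie hp F
    rw [bhpF] at h1
    have h2 : ad ℝ L (-F) = -fF := by
      ext w; simp only [ad_apply, LinearMap.neg_apply, neg_lie, hfF]
    rw [h2, ← hqQ] at h1
    rw [sub_eq_iff_eq_add'.mp h1.symm, sub_eq_add_neg]
  have RAq : AH * qQ = qQ * AH := by
    have h1 := adlie h hp
    rw [bhhp, adzero, ← hAH, ← hqQ] at h1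
    exact sub_eq_zero.mp h1.symm
  have Rde : dD * eE = eE * dD := by
    have h1 := adlie (h - hp) E
    rw [bh0E, adzero, ← hdD, ← heE] at h1
    exact sub_eq_zero.mp h1.symm
  have Rdf : dD * fF = fF * dD := by
    have h1 := adlie (h - hp) F
    rw [bh0F, adzero, ← hdD, ← hfF] at h1
    exact sub_eq_zero.mp h1.symm
  have Rdq : dD * qQ = qQ * dD := by
    have h1 := adlie (h - hp) hp
    rw [bh0hp, adzero, ← hdD, ← hqQ] at h1
    exact sub_eq_zero.mp h1.symm
  set Om : Module.End ℝ L := eE * fF + fF * eE + (2 : ℝ) • (qQ * qQ) with hOm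
  obtain ⟨Ce, Cf, Cq⟩ := casimir_comm eE fF qQ Ref Rqe Rqf
  rw [← hOm] at Ce Cf Cq
  have pOm : ∀ w : L, Om w = ⁅E, ⁅F, w⁆⁆ + ⁅F, ⁅E, w⁆⁆ + (2 : ℝ) • ⁅hp, ⁅hp, w⁆⁆ := by
    intro w
    rw [hOm]
    simp only [LinearMap.add_apply, Module.End.mul_apply, LinearMap.smul_apply,
      heE, hfF, hqQ, ad_apply]
  have pCe : ∀ w : L, Om ⁅E, w⁆ = ⁅E, Om w⁆ := by
    intro w
    have hw := LinearMap.congr_fun Ce w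
    simpa only [Module.End.mul_apply, heE, ad_apply] using hw
  have pCf : ∀ w : L, Om ⁅F, w⁆ = ⁅F, Om w⁆ := by
    intro w
    have hw := LinearMap.congr_fun Cf w
    simpa only [Module.End.mul_apply, hfF, ad_apply] using hw
  have lemOm1 : ∀ w : L, ⁅hp, w⁆ = w → Om w = (4 : ℝ) • w := by
    intro w hw
    have he0 : ⁅E, w⁆ = 0 := lemQ1 w hw
    rw [pOm w, comEF w, he0, lie_zero, hw, hw]
    module
  have lemOmm1 : ∀ w : L, ⁅hp, w⁆ = -w → Om w = (4 : ℝ) • w := by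
    intro w hw
    have hf0 : ⁅F, w⁆ = 0 := lemQm1 w hw
    rw [pOm w, hf0, lie_zero, lemFEm1 w hw, hw, lie_neg, hw]
    module
  have lemQ0fact : ∀ w : L, ⁅hp, w⁆ = 0 → Om w = (4 : ℝ) • w →
      ⁅F, ⁅E, w⁆⁆ = (2 : ℝ) • w ∧ ⁅E, ⁅F, w⁆⁆ = (2 : ℝ) • w := by
    intro w hw hM
    have heq : ⁅E, ⁅F, w⁆⁆ = ⁅F, ⁅E, w⁆⁆ := by
      rw [comEF w, hw, smul_zero, add_zero]
    have h3 := pOm w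
    rw [heq, hw, lie_zero, smul_zero, add_zero, hM] at h3
    have h2 : (2 : ℝ) • ⁅F, ⁅E, w⁆⁆ = (2 : ℝ) • ((2 : ℝ) • w) := by
      linear_combination (norm := module) -h3
    have hfe2 : ⁅F, ⁅E, w⁆⁆ = (2 : ℝ) • w :=
      smul_right_injective L (by norm_num : (2 : ℝ) ≠ 0) h2
    exact ⟨hfe2, heq.trans hfe2⟩
  -- Ω(Ω - 4) = 0
  have OmOm : ∀ v : L, Om (Om v) = (4 : ℝ) • Om v := by
    intro v
    obtain ⟨a, -, b, -, c, -, hsum, hqa, hqb, hqc⟩ :=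
      split3 qQ hq3' ⊤ (fun u _ => Submodule.mem_top) (Submodule.mem_top (x := v))
    rw [hqQ, ad_apply] at hqa hqb hqc
    have hqa' : ⁅hp, a⁆ = -a := by rw [hqa, neg_smul, one_smul]
    have hqc' : ⁅hp, c⁆ = c := by rw [hqc, one_smul]
    have hOa : Om a = (4 : ℝ) • a := lemOmm1 a hqa'
    have hOc : Om c = (4 : ℝ) • c := lemOm1 c hqc'
    have hsh : ⁅hp, ⁅E, b⁆⁆ = ⁅E, b⁆ := by
      have hs := eig_step hp E bhpE (c := 0) (by rw [zero_smul]; exact hqb)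
      rw [hs, zero_add, one_smul]
    have hOEb : Om ⁅E, b⁆ = (4 : ℝ) • ⁅E, b⁆ := lemOm1 _ hsh
    have hOb : Om b = (2 : ℝ) • ⁅F, ⁅E, b⁆⁆ := by
      rw [pOm b, comEF b, hqb, lie_zero]
      module
    have hOa2 : Om (Om a) = (4 : ℝ) • Om a := by rw [hOa, map_smul, hOa]
    have hOc2 : Om (Om c) = (4 : ℝ) • Om c := by rw [hOc, map_smul, hOc]
    have hOb2 : Om (Om b) = (4 : ℝ) • Om b := by
      rw [hOb, map_smul, pCf, hOEb, lie_smul]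
      module
    rw [hsum, map_add, map_add, map_add, map_add, hOa2, hOb2, hOc2]
    module
  -- elements of ker Ω are annihilated by E, F, hp
  have Nfacts : ∀ n : L, Om n = 0 → ⁅E, n⁆ = 0 ∧ ⁅F, n⁆ = 0 ∧ ⁅hp, n⁆ = 0 := by
    intro n hn
    have cN : ∀ u ∈ LinearMap.ker Om, qQ u ∈ LinearMap.ker Om := by
      intro u hu
      rw [LinearMap.mem_ker] at hu ⊢
      have h5 := LinearMap.congr_fun Cq u
      simp only [Module.End.mul_apply] at h5
      rw [hu, map_zero] at h5
      exact h5
    obtain ⟨a, ha, b, hb, c, hc, hsum, hqa, hqb, hqc⟩ :=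
      split3 qQ hq3' (LinearMap.ker Om) cN (LinearMap.mem_ker.mpr hn)
    rw [LinearMap.mem_ker] at ha hb hc
    rw [hqQ, ad_apply] at hqa hqb hqc
    have hqa' : ⁅hp, a⁆ = -a := by rw [hqa, neg_smul, one_smul]
    have hqc' : ⁅hp, c⁆ = c := by rw [hqc, one_smul]
    have ha0 : a = 0 := by
      have h4 := lemOmm1 a hqa'
      rw [ha] at h4
      exact (smul_eq_zero.mp h4.symm).resolve_left (by norm_num)
    have hc0 : c = 0 := by
      have h4 := lemOm1 c hqc'
      rw [hc] at h4
      exact (smul_eq_zero.mp h4.symm).resolve_left (by norm_num)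
    have hnb : n = b := by rw [hsum, ha0, hc0, zero_add, add_zero]
    have hqn : ⁅hp, n⁆ = 0 := by rw [hnb]; exact hqb
    refine ⟨?_, ?_, hqn⟩
    · have hsh : ⁅hp, ⁅E, n⁆⁆ = ⁅E, n⁆ := by
        have hs := eig_step hp E bhpE (c := 0) (by rw [zero_smul]; exact hqn)
        rw [hs, zero_add, one_smul]
      have hOEn : Om ⁅E, n⁆ = 0 := by rw [pCe n, hn, lie_zero]
      have h4 := lemOm1 _ hsh
      rw [hOEn] at h4
      exact (smul_eq_zero.mp h4.symm).resolve_left (by norm_num)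
    · have hsh : ⁅hp, ⁅F, n⁆⁆ = -⁅F, n⁆ := by
        have hs := eig_step' hp F bhpF (c := 0) (by rw [zero_smul]; exact hqn)
        rw [hs, show (0 : ℝ) - 1 = -1 by norm_num, neg_smul, one_smul]
      have hOFn : Om ⁅F, n⁆ = 0 := by rw [pCf n, hn, lie_zero]
      have h4 := lemOmm1 _ hsh
      rw [hOFn] at h4
      exact (smul_eq_zero.mp h4.symm).resolve_left (by norm_num)
  -- the nine-case eigenvalue comparison
  have core9 : ∀ (w : L) (i j : ℝ), (i = -1 ∨ i = 0 ∨ i = 1) → (j = -1 ∨ j = 0 ∨ j = 1) →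
      Om w = (4 : ℝ) • w → ⁅h, w⁆ = i • w → ⁅hp, w⁆ = j • w → ⁅h, w⁆ = ⁅hp, w⁆ := by
    intro w i j hi hj hM hA hq
    have hzero : ∀ u : L, (2 : ℝ) • u = 0 → u = 0 := fun u hu =>
      (smul_eq_zero.mp hu).resolve_left (by norm_num)
    rcases hi with rfl | rfl | rfl <;> rcases hj with rfl | rfl | rfl
    · rw [hA, hq]
    · -- (-1, 0)
      have hA' : ⁅h, w⁆ = -w := by rw [hA, neg_smul, one_smul]
      have hq0 : ⁅hp, w⁆ = 0 := by rw [hq, zero_smul]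
      have hEF2 := (lemQ0fact w hq0 hM).2
      rw [hdn w hA', lie_zero] at hEF2
      have hw0 : w = 0 := hzero w hEF2.symm
      rw [hw0, lie_zero, lie_zero]
    · -- (-1, 1)
      have hA' : ⁅h, w⁆ = -w := by rw [hA, neg_smul, one_smul]
      have hq1 : ⁅hp, w⁆ = w := by rw [hq, one_smul]
      have hEF2 := lemEF1 w hq1
      rw [hdn w hA', lie_zero] at hEF2
      have hw0 : w = 0 := hzero w hEF2.symm
      rw [hw0, lie_zero, lie_zero]
    · -- (0, -1)
      have hq' : ⁅hp, w⁆ = -w := by rw [hq, neg_smul, one_smul]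
      have hFE := lemFEm1 w hq'
      have hqu : ⁅hp, ⁅E, w⁆⁆ = 0 := by
        have hs := eig_step hp E bhpE (c := -1) hq
        rw [hs, show (-1 : ℝ) + 1 = 0 by norm_num, zero_smul]
      have hAu : ⁅h, ⁅E, w⁆⁆ = ⁅E, w⁆ := by
        have hs := eig_step h E bhE (c := 0) hA
        rw [hs, zero_add, one_smul]
      have hMu : Om ⁅E, w⁆ = (4 : ℝ) • ⁅E, w⁆ := by rw [pCe w, hM, lie_smul]
      have hu4 := (lemQ0fact _ hqu hMu).1
      rw [hup _ hAu, lie_zero] at hu4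
      have hu0 : ⁅E, w⁆ = 0 := hzero _ hu4.symm
      rw [hu0, lie_zero] at hFE
      have hw0 : w = 0 := hzero w hFE.symm
      rw [hw0, lie_zero, lie_zero]
    · rw [hA, hq]
    · -- (0, 1)
      have hq1 : ⁅hp, w⁆ = w := by rw [hq, one_smul]
      have hE2 := lemEF1 w hq1
      have hqu : ⁅hp, ⁅F, w⁆⁆ = 0 := by
        have hs := eig_step' hp F bhpF (c := 1) (by rw [one_smul]; exact hq1)
        rw [hs, show (1 : ℝ) - 1 = 0 by norm_num, zero_smul]
      have hAu : ⁅h, ⁅F, w⁆⁆ = -⁅F, w⁆ := by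
        have hs := eig_step' h F bhF (c := 0) hA
        rw [hs, show (0 : ℝ) - 1 = -1 by norm_num, neg_smul, one_smul]
      have hMu : Om ⁅F, w⁆ = (4 : ℝ) • ⁅F, w⁆ := by rw [pCf w, hM, lie_smul]
      have hu4 := (lemQ0fact _ hqu hMu).2
      rw [hdn _ hAu, lie_zero] at hu4
      have hu0 : ⁅F, w⁆ = 0 := hzero _ hu4.symm
      rw [hu0, lie_zero] at hE2
      have hw0 : w = 0 := hzero w hE2.symm
      rw [hw0, lie_zero, lie_zero]
    · -- (1, -1)
      have hA1 : ⁅h, w⁆ = w := by rw [hA, one_smul]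
      have hq' : ⁅hp, w⁆ = -w := by rw [hq, neg_smul, one_smul]
      have hFE := lemFEm1 w hq'
      rw [hup w hA1, lie_zero] at hFE
      have hw0 : w = 0 := hzero w hFE.symm
      rw [hw0, lie_zero, lie_zero]
    · -- (1, 0)
      have hA1 : ⁅h, w⁆ = w := by rw [hA, one_smul]
      have hq0 : ⁅hp, w⁆ = 0 := by rw [hq, zero_smul]
      have hFE := (lemQ0fact w hq0 hM).1
      rw [hup w hA1, lie_zero] at hFE
      have hw0 : w = 0 := hzero w hFE.symm
      rw [hw0, lie_zero, lie_zero]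
    · rw [hA, hq]
  -- Ω commutes with AH
  have t1 : dD * (eE * fF) = (eE * fF) * dD := by
    rw [← mul_assoc, Rde, mul_assoc, Rdf, ← mul_assoc]
  have t2 : dD * (fF * eE) = (fF * eE) * dD := by
    rw [← mul_assoc, Rdf, mul_assoc, Rde, ← mul_assoc]
  have t3 : dD * (qQ * qQ) = (qQ * qQ) * dD := by
    rw [← mul_assoc, Rdq, mul_assoc, Rdq, ← mul_assoc]
  have hdOm : dD * Om = Om * dD := by
    rw [hOm, mul_add, mul_add, add_mul, add_mul, mul_smul_comm, smul_mul_assoc, t1, t2, t3]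
  have hAd : AH = dD + qQ := by
    rw [hAH, hdD, hqQ]
    ext w
    simp only [LinearMap.add_apply, ad_apply]
    rw [sub_lie]
    abel
  have hOmA : Om * AH = AH * Om := by
    calc Om * AH = Om * dD + Om * qQ := by rw [hAd, mul_add]
      _ = dD * Om + qQ * Om := by rw [← hdOm, Cq]
      _ = AH * Om := by rw [hAd, add_mul]
  -- the centralizer statement: [h - hp, -] kills ker(Ω - 4)
  set WM : Submodule ℝ L := LinearMap.ker (Om - (4 : ℝ) • (1 : Module.End ℝ L)) with hWM
  have memWM : ∀ u : L, u ∈ WM ↔ Om u = (4 : ℝ) • u := by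
    intro u
    rw [hWM, LinearMap.mem_ker, LinearMap.sub_apply, LinearMap.smul_apply,
      Module.End.one_apply, sub_eq_zero]
  have cWMA : ∀ u ∈ WM, AH u ∈ WM := by
    intro u hu
    rw [memWM] at hu ⊢
    have h5 := LinearMap.congr_fun hOmA u
    simp only [Module.End.mul_apply] at h5
    rw [hu, map_smul] at h5
    exact h5
  have opA : ∀ u : L, AH u = ⁅h, u⁆ := fun u => by rw [hAH, ad_apply]
  have Dzero : ∀ v : L, Om v = (4 : ℝ) • v → ⁅h - hp, v⁆ = 0 := by
    have pieceA : ∀ (i : ℝ), (i = -1 ∨ i = 0 ∨ i = 1) → ∀ w : L,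
        Om w = (4 : ℝ) • w → ⁅h, w⁆ = i • w → ⁅h - hp, w⁆ = 0 := by
      intro i hi w hwM hAw
      set Wi : Submodule ℝ L := WM ⊓ LinearMap.ker (AH - i • (1 : Module.End ℝ L)) with hWi
      have memWi : ∀ u : L, u ∈ Wi ↔ Om u = (4 : ℝ) • u ∧ AH u = i • u := by
        intro u
        rw [hWi, Submodule.mem_inf, memWM, LinearMap.mem_ker, LinearMap.sub_apply,
          LinearMap.smul_apply, Module.End.one_apply, sub_eq_zero]
      have cWiq : ∀ u ∈ Wi, qQ u ∈ Wi := by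
        intro u hu
        rw [memWi] at hu ⊢
        obtain ⟨hu1, hu2⟩ := hu
        constructor
        · have h5 := LinearMap.congr_fun Cq u
          simp only [Module.End.mul_apply] at h5
          rw [hu1, map_smul] at h5
          exact h5
        · have h5 := LinearMap.congr_fun RAq u
          simp only [Module.End.mul_apply] at h5
          rw [hu2, map_smul] at h5
          exact h5
      obtain ⟨a, ha, b, hb, c, hc, hsum, hqa, hqb, hqc⟩ :=
        split3 qQ hq3' Wi cWiq ((memWi w).mpr ⟨hwM, by rw [opA]; exact hAw⟩)
      rw [memWi] at ha hb hc
      rw [hqQ, ad_apply] at hqa hqb hqc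
      have ca := core9 a i (-1) hi (Or.inl rfl) ha.1
        (by rw [← opA]; exact ha.2) hqa
      have cb := core9 b i 0 hi (Or.inr (Or.inl rfl)) hb.1
        (by rw [← opA]; exact hb.2) (by rw [hqb, zero_smul])
      have cc := core9 c i 1 hi (Or.inr (Or.inr rfl)) hc.1
        (by rw [← opA]; exact hc.2) hqc
      have fa : ⁅h - hp, a⁆ = 0 := by rw [sub_lie, ca, sub_self]
      have fb : ⁅h - hp, b⁆ = 0 := by rw [sub_lie, cb, sub_self]
      have fc : ⁅h - hp, c⁆ = 0 := by rw [sub_lie, cc, sub_self]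
      rw [hsum, lie_add, lie_add, fa, fb, fc, add_zero, add_zero]
    intro v hv
    obtain ⟨a, ha, b, hb, c, hc, hsum, hAa, hAb, hAc⟩ :=
      split3 AH hA3' WM cWMA ((memWM v).mpr hv)
    rw [memWM] at ha hb hc
    rw [hAH, ad_apply] at hAa hAb hAc
    have fa := pieceA (-1) (Or.inl rfl) a ha hAa
    have fb := pieceA 0 (Or.inr (Or.inl rfl)) b hb (by rw [hAb, zero_smul])
    have fc := pieceA 1 (Or.inr (Or.inr rfl)) c hc hAc
    rw [hsum, lie_add, lie_add, fa, fb, fc, add_zero, add_zero]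
  have OmE : Om E = (4 : ℝ) • E := lemOm1 E bhpE
  -- the centralizer ideal
  let C : LieIdeal ℝ L :=
    { carrier := {y : L | ∀ m : L, Om m = (4 : ℝ) • m → ⁅y, m⁆ = 0}
      add_mem' := by
        intro a b ha hb m hm
        rw [add_lie, ha m hm, hb m hm, add_zero]
      zero_mem' := by
        intro m hm
        rw [zero_lie]
      smul_mem' := by
        intro t a ha m hm
        rw [smul_lie, ha m hm, smul_zero]
      lie_mem := by
        intro a y hy m hm
        have hym : ⁅y, m⁆ = 0 := hy m hm
        have hOma := OmOm a
        have hnOm : Om (a - (4⁻¹ : ℝ) • Om a) = 0 := by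
          rw [map_sub, map_smul, hOma]
          module
        have hmOm : Om ((4⁻¹ : ℝ) • Om a) = (4 : ℝ) • ((4⁻¹ : ℝ) • Om a) := by
          rw [map_smul, hOma]
          module
        obtain ⟨hEn, hFn, hqn⟩ := Nfacts _ hnOm
        have hnm : Om ⁅a - (4⁻¹ : ℝ) • Om a, m⁆ = (4 : ℝ) • ⁅a - (4⁻¹ : ℝ) • Om a, m⁆ := by
          set n : L := a - (4⁻¹ : ℝ) • Om a with hn_def
          have u1 : ⁅F, ⁅n, m⁆⁆ = ⁅n, ⁅F, m⁆⁆ := by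
            rw [leibniz_lie F n m, hFn, zero_lie, zero_add]
          have u2 : ⁅E, ⁅n, ⁅F, m⁆⁆⁆ = ⁅n, ⁅E, ⁅F, m⁆⁆⁆ := by
            rw [leibniz_lie E n ⁅F, m⁆, hEn, zero_lie, zero_add]
          have u3 : ⁅E, ⁅n, m⁆⁆ = ⁅n, ⁅E, m⁆⁆ := by
            rw [leibniz_lie E n m, hEn, zero_lie, zero_add]
          have u4 : ⁅F, ⁅n, ⁅E, m⁆⁆⁆ = ⁅n, ⁅F, ⁅E, m⁆⁆⁆ := by
            rw [leibniz_lie F n ⁅E, m⁆, hFn, zero_lie, zero_add]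
          have u5 : ⁅hp, ⁅n, m⁆⁆ = ⁅n, ⁅hp, m⁆⁆ := by
            rw [leibniz_lie hp n m, hqn, zero_lie, zero_add]
          have u6 : ⁅hp, ⁅n, ⁅hp, m⁆⁆⁆ = ⁅n, ⁅hp, ⁅hp, m⁆⁆⁆ := by
            rw [leibniz_lie hp n ⁅hp, m⁆, hqn, zero_lie, zero_add]
          calc Om ⁅n, m⁆ = ⁅n, Om m⁆ := by
                rw [pOm ⁅n, m⁆, u1, u2, u3, u4, u5, u6, pOm m, lie_add, lie_add, lie_smul]
            _ = (4 : ℝ) • ⁅n, m⁆ := by rw [hm, lie_smul]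
        have hterm1 : ⁅y, ⁅a - (4⁻¹ : ℝ) • Om a, m⁆⁆ = 0 := hy _ hnm
        have hterm2 : ⁅y, ⁅(4⁻¹ : ℝ) • Om a, m⁆⁆ = 0 := by
          rw [leibniz_lie y ((4⁻¹ : ℝ) • Om a) m, hy _ hmOm, hym, zero_lie, lie_zero, add_zero]
        have hsplit : ⁅a, m⁆ = ⁅a - (4⁻¹ : ℝ) • Om a, m⁆ + ⁅(4⁻¹ : ℝ) • Om a, m⁆ := by
          rw [sub_lie]
          abel
        rw [lie_lie, hym, lie_zero, hsplit, lie_add, hterm1, hterm2, add_zero, zero_sub,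
          neg_zero] }
  have memC : ∀ y : L, y ∈ C ↔ ∀ m : L, Om m = (4 : ℝ) • m → ⁅y, m⁆ = 0 := fun y => Iff.rfl
  rcases LieAlgebra.IsSimple.eq_bot_or_eq_top (R := ℝ) (L := L) C with hbot | htop
  · -- C = ⊥, hence h = hp, and we conclude
    have hmemC : h - hp ∈ C := (memC _).mpr (fun m hm => Dzero m hm)
    rw [hbot] at hmemC
    have h0 : h - hp = 0 := by simpa using hmemC
    have hph : hp = h := by
      have h1 := sub_eq_zero.mp h0
      exact h1.symm
    have fEh : ⁅E, h⁆ = -E := bEh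
    have fFh : ⁅F, h⁆ = F := bFh
    have fEx : ⁅E, x⁆ = h := by rw [bEx, hph]
    have fFx : ⁅F, x⁆ = -h := by rw [bFx, hph]
    have fEF : ⁅E, F⁆ = (2 : ℝ) • h := by rw [bEF, hph]
    have fFE : ⁅F, E⁆ = -((2 : ℝ) • h) := by rw [skew F E, fEF]
    have e1 : endExp (ad ℝ L E) h = h - E := by
      rw [endExp_apply E hE3, fEh, lie_neg, lie_self, neg_zero, smul_zero, add_zero]
      module
    have e2 : endExp (ad ℝ L (-F)) (h - E) = -h - E := by
      rw [endExp_apply (-F) hnF3]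
      have c1 : ⁅-F, h - E⁆ = -F - (2 : ℝ) • h := by
        rw [neg_lie, lie_sub, fFh, fFE]
        module
      rw [c1]
      have c2 : ⁅-F, -F - (2 : ℝ) • h⁆ = (2 : ℝ) • F := by
        rw [neg_lie, lie_sub, lie_neg, lie_self, lie_smul, fFh]
        module
      rw [c2]
      module
    have e3 : endExp (ad ℝ L E) (-h - E) = -h := by
      rw [endExp_apply E hE3]
      have c1 : ⁅E, -h - E⁆ = E := by
        rw [lie_sub, lie_neg, fEh, lie_self]
        module
      rw [c1, lie_self, smul_zero, add_zero]
      module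
    have x1 : endExp (ad ℝ L E) x = x + h - (2⁻¹ : ℝ) • E := by
      rw [endExp_apply E hE3, fEx, fEh]
      module
    have x2 : endExp (ad ℝ L (-F)) (x + h - (2⁻¹ : ℝ) • E) = x + h - (2⁻¹ : ℝ) • E - F := by
      rw [endExp_apply (-F) hnF3]
      have c1 : ⁅-F, x + h - (2⁻¹ : ℝ) • E⁆ = -F := by
        rw [neg_lie, lie_sub, lie_add, fFx, fFh, lie_smul, fFE]
        module
      rw [c1, lie_self, smul_zero, add_zero]
      module
    have x3 : endExp (ad ℝ L E) (x + h - (2⁻¹ : ℝ) • E - F) = -x := by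
      rw [endExp_apply E hE3]
      have c1 : ⁅E, x + h - (2⁻¹ : ℝ) • E - F⁆ = -h - E := by
        rw [lie_sub, lie_sub, lie_add, fEx, fEh, lie_smul, lie_self, fEF]
        module
      rw [c1]
      have c2 : ⁅E, -h - E⁆ = E := by
        rw [lie_sub, lie_neg, fEh, lie_self]
        module
      rw [c2, hE_def, hF_def]
      module
    refine ⟨⟨[E, -F, E], ?_⟩, ⟨[E, -F, E], ?_⟩⟩
    · simp only [List.map_cons, List.map_nil, List.prod_cons, List.prod_nil, mul_one,
        Module.End.mul_apply]
      rw [e1, e2, e3]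
    · simp only [List.map_cons, List.map_nil, List.prod_cons, List.prod_nil, mul_one,
        Module.End.mul_apply]
      rw [x1, x2, x3]
  · -- C = ⊤ is impossible
    exfalso
    have hmem : hp ∈ C := by rw [htop]; exact LieSubmodule.mem_top _
    have h5 := (memC hp).mp hmem E OmE
    rw [bhpE] at h5
    exact Ene h5
end

section
/- Let G = G↑ ∪ G↑τ be a group with a subgroup G↑ of index 2 and an involution τ ∈ G ∖ G↑, and let U be an (anti-)unitary representation of G on a complex Hilbert space H. Set M := {T ∈ B(H) : T U(g) = U(g) T for all g ∈ G↑} (the commutant of U(G↑)) and J := U(τ). Then for every unitary N ∈ M with J N J = N⁻¹ there exists a unique (anti-)unitary representation Ũ of G on H with Ũ|_{G↑} = U|_{G↑} and Ũ(τ) = N∘J, and the assignment N ↦ Ũ is a bijection from U(M)⁻ := {N ∈ M unitary : J N J = N⁻¹} onto the set of (anti-)unitary representations of G extending U|_{G↑}. -/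
variable {G : Type*} [Group G] {H : Type*}
  [NormedAddCommGroup H] [InnerProductSpace ℂ H] [CompleteSpace H]

/-- An *(anti-)unitary representation* of a group `G` with distinguished index-two
subgroup `G↑` on a complex Hilbert space `H`: a homomorphism into the group of
`ℝ`-linear surjective isometries of `H` which is `ℂ`-linear (unitary) on `G↑` and
conjugate-linear (antiunitary) on `G ∖ G↑`. -/
def IsAntiUnitaryRep (Gup : Subgroup G) (U : G →* (H ≃ₗᵢ[ℝ] H)) : Prop :=
  (∀ g ∈ Gup, ∀ (c : ℂ) (z : H), U g (c • z) = c • U g z) ∧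
    ∀ g ∉ Gup, ∀ (c : ℂ) (z : H), U g (c • z) = (starRingEnd ℂ) c • U g z

/-- Upgrade an `ℝ`-linear isometric equivalence that happens to be `ℂ`-linear to a
`ℂ`-linear isometric equivalence. -/
noncomputable def cLinOf (e : H ≃ₗᵢ[ℝ] H) (h : ∀ (c : ℂ) (z : H), e (c • z) = c • e z) :
    H ≃ₗᵢ[ℂ] H :=
  { toFun := e
    map_add' := fun x y => e.map_add x y
    map_smul' := h
    invFun := e.symm
    left_inv := e.symm_apply_apply
    right_inv := e.apply_symm_apply
    norm_map' := e.norm_map }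

/-- Downgrade a `ℂ`-linear isometric equivalence to an `ℝ`-linear one. -/
def rLinOf (N : H ≃ₗᵢ[ℂ] H) : H ≃ₗᵢ[ℝ] H :=
  { toFun := N
    map_add' := fun x y => N.map_add x y
    map_smul' := fun (r : ℝ) z => by
      show N (r • z) = r • N z
      rw [← algebraMap_smul ℂ r z, N.map_smul, algebraMap_smul]
    invFun := N.symm
    left_inv := N.symm_apply_apply
    right_inv := N.apply_symm_apply
    norm_map' := N.norm_map }

/-- Let `G = G↑ ∪ G↑τ` with `G↑` of index two and `τ ∉ G↑` an
involution, and let `U` be an (anti-)unitary representation of `G` on `H`.  Set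
`J := U τ`.  Then `N ↦ Ũ`, where `Ũ` is the unique (anti-)unitary extension of
`U|_{G↑}` with `Ũ τ = N ∘ J`, is a bijection from the unitaries `N` in the commutant of
`U(G↑)` satisfying `J N J = N⁻¹` onto the set of (anti-)unitary representations of `G`
extending `U|_{G↑}`. -/
theorem antiunitary_extensions_param
    (Gup : Subgroup G) (hindex : Gup.index = 2)
    (τ : G) (hτ : τ ∉ Gup) (hτ2 : τ ^ 2 = 1)
    (U : G →* (H ≃ₗᵢ[ℝ] H)) (hU : IsAntiUnitaryRep Gup U) :
    (∀ N : H ≃ₗᵢ[ℂ] H,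
      (∀ g ∈ Gup, ∀ z : H, N (U g z) = U g (N z)) →
      (∀ z : H, U τ (N (U τ z)) = N.symm z) →
      ∃! V : G →* (H ≃ₗᵢ[ℝ] H), IsAntiUnitaryRep Gup V ∧
        (∀ g ∈ Gup, V g = U g) ∧ ∀ z : H, V τ z = N (U τ z)) ∧
    ∀ V : G →* (H ≃ₗᵢ[ℝ] H), IsAntiUnitaryRep Gup V → (∀ g ∈ Gup, V g = U g) →
      ∃! N : H ≃ₗᵢ[ℂ] H,
        (∀ g ∈ Gup, ∀ z : H, N (U g z) = U g (N z)) ∧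
        (∀ z : H, U τ (N (U τ z)) = N.symm z) ∧
        ∀ z : H, V τ z = N (U τ z) := by
  classical
  have hττ : τ * τ = 1 := by rw [← pow_two]; exact hτ2
  -- basic application lemmas
  have hmulapp : ∀ (e e' : H ≃ₗᵢ[ℝ] H) (z : H), (e * e') z = e (e' z) := fun _ _ _ => rfl
  have hUap : ∀ (a b : G) (z : H), U (a * b) z = U a (U b z) := fun a b z => by
    rw [map_mul]; rfl
  have hJJ : ∀ z : H, U τ (U τ z) = z := by
    intro z
    have : U (τ * τ) z = U 1 z := by rw [hττ]
    rw [hUap] at this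
    simpa using this
  -- index-two membership lemmas
  have hmm : ∀ a b : G, a * b ∈ Gup ↔ (a ∈ Gup ↔ b ∈ Gup) := fun a b =>
    Subgroup.mul_mem_iff_of_index_two hindex
  have hm1 : ∀ {a b : G}, a ∈ Gup → b ∉ Gup → a * b ∉ Gup := fun ha hb hab =>
    hb (((hmm _ _).1 hab).1 ha)
  have hm2 : ∀ {a b : G}, a ∉ Gup → b ∈ Gup → a * b ∉ Gup := fun ha hb hab =>
    ha (((hmm _ _).1 hab).2 hb)
  have hm3 : ∀ {a b : G}, a ∉ Gup → b ∉ Gup → a * b ∈ Gup := fun ha hb =>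
    (hmm _ _).2 (iff_of_false ha hb)
  constructor
  · -- Part 1: from N construct the unique extension V
    intro N hcomm hJNJ
    obtain ⟨W, hWap⟩ : ∃ W : H ≃ₗᵢ[ℝ] H, ∀ z : H, W z = N (U τ z) :=
      ⟨rLinOf N * U τ, fun z => rfl⟩
    have hWW : W * W = 1 := by
      ext z
      rw [hmulapp, hWap, hWap, hJNJ, N.apply_symm_apply]
      rfl
    have hWop : ∀ h ∈ Gup, W * U h = U (τ * h * τ) * W := by
      intro h hh
      ext z
      rw [hmulapp, hmulapp, hWap, hWap]
      have h1 : U τ (U h z) = U (τ * h * τ) (U τ z) := by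
        rw [← hUap, ← hUap]
        congr 1
        rw [mul_assoc, hττ, mul_one]
      rw [h1]
      exact hcomm _ ((hmm _ _).2 (iff_of_false (hm2 hτ hh) hτ)) (U τ z)
    have hfmul : ∀ a b : G,
        (fun g => if g ∈ Gup then U g else U (g * τ) * W) (a * b) =
          (fun g => if g ∈ Gup then U g else U (g * τ) * W) a *
            (fun g => if g ∈ Gup then U g else U (g * τ) * W) b := by
      intro a b
      by_cases ha : a ∈ Gup <;> by_cases hb : b ∈ Gup <;> simp only
      · rw [if_pos ha, if_pos hb, if_pos (Gup.mul_mem ha hb), map_mul]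
      · rw [if_pos ha, if_neg hb, if_neg (hm1 ha hb),
          show a * b * τ = a * (b * τ) from mul_assoc a b τ, map_mul, mul_assoc]
      · rw [if_neg ha, if_pos hb, if_neg (hm2 ha hb),
          mul_assoc (U (a * τ)) W (U b), hWop b hb, ← mul_assoc, ← map_mul,
          show a * τ * (τ * b * τ) = a * (τ * τ) * b * τ by group, hττ, mul_one]
      · rw [if_neg ha, if_neg hb, if_pos (hm3 ha hb),
          mul_assoc (U (a * τ)) W (U (b * τ) * W), ← mul_assoc W (U (b * τ)) W,
          hWop _ (hm3 hb hτ), mul_assoc (U (τ * (b * τ) * τ)) W W, hWW, mul_one,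
          ← map_mul, show a * τ * (τ * (b * τ) * τ) = a * (τ * τ) * b * (τ * τ) by group,
          hττ, mul_one, mul_one]
    refine ⟨MonoidHom.mk' (fun g => if g ∈ Gup then U g else U (g * τ) * W) hfmul, ⟨⟨?_, ?_⟩, ?_, ?_⟩, ?_⟩
    · intro g hg c z
      show (if g ∈ Gup then U g else U (g * τ) * W) (c • z)
          = c • (if g ∈ Gup then U g else U (g * τ) * W) z
      rw [if_pos hg]
      exact hU.1 g hg c z
    · intro g hg c z
      show (if g ∈ Gup then U g else U (g * τ) * W) (c • z)
          = (starRingEnd ℂ) c • (if g ∈ Gup then U g else U (g * τ) * W) z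
      rw [if_neg hg, hmulapp, hmulapp, hWap, hWap, hU.2 τ hτ c z, N.map_smul,
        hU.1 _ (hm3 hg hτ) _ _]
    · intro g hg
      show (if g ∈ Gup then U g else U (g * τ) * W) = U g
      rw [if_pos hg]
    · intro z
      show (if τ ∈ Gup then U τ else U (τ * τ) * W) z = N (U τ z)
      rw [if_neg hτ, hττ, map_one, one_mul, hWap]
    · -- uniqueness of V
      rintro V' ⟨_, hext', hτ'⟩
      apply MonoidHom.ext
      intro g
      show V' g = (if g ∈ Gup then U g else U (g * τ) * W)
      by_cases hg : g ∈ Gup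
      · rw [hext' g hg, if_pos hg]
      · have hVτ : V' τ = W := by
          ext z
          rw [hτ' z, hWap]
        have hg' : g = g * τ * τ := by rw [mul_assoc, hττ, mul_one]
        rw [if_neg hg]
        calc V' g = V' (g * τ * τ) := by rw [← hg']
          _ = V' (g * τ) * V' τ := by rw [map_mul]
          _ = U (g * τ) * W := by rw [hext' _ (hm3 hg hτ), hVτ]
  · -- Part 2: from an extension V recover the unique N
    intro V hrep hext
    have hVap : ∀ (a b : G) (z : H), V (a * b) z = V a (V b z) := fun a b z => by
      rw [map_mul]; rfl
    have hVV : ∀ z : H, V τ (V τ z) = z := by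
      intro z
      have : V (τ * τ) z = V 1 z := by rw [hττ]
      rw [hVap] at this
      simpa using this
    have hlin : ∀ (c : ℂ) (z : H), (V τ * U τ) (c • z) = c • (V τ * U τ) z := by
      intro c z
      rw [hmulapp, hmulapp, hU.2 τ hτ c z, hrep.2 τ hτ _ _, Complex.conj_conj]
    set N : H ≃ₗᵢ[ℂ] H := cLinOf (V τ * U τ) hlin with hN
    have hNap : ∀ z : H, N z = V τ (U τ z) := fun z => rfl
    refine ⟨N, ⟨?_, ?_, ?_⟩, ?_⟩
    · intro g hg z
      rw [hNap, hNap]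
      have h1 : U τ (U g z) = U (τ * g * τ) (U τ z) := by
        rw [← hUap, ← hUap]
        congr 1
        rw [mul_assoc, hττ, mul_one]
      have hmem : τ * g * τ ∈ Gup := (hmm _ _).2 (iff_of_false (hm2 hτ hg) hτ)
      rw [h1, ← hext _ hmem, ← hVap, ← hext g hg, ← hVap]
      have : τ * (τ * g * τ) = g * τ := by
        rw [show τ * (τ * g * τ) = (τ * τ) * (g * τ) by group, hττ, one_mul]
      rw [this]
    · intro z
      have hZ : N (U τ (N (U τ z))) = z := by
        rw [hNap, hNap, hJJ, hJJ, hVV]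
      calc U τ (N (U τ z)) = N.symm (N (U τ (N (U τ z)))) := (N.symm_apply_apply _).symm
        _ = N.symm z := by rw [hZ]
    · intro z
      rw [hNap, hJJ]
    · rintro N' ⟨_, _, h3'⟩
      ext z
      rw [hNap]
      calc N' z = N' (U τ (U τ z)) := by rw [hJJ]
        _ = V τ (U τ z) := (h3' (U τ z)).symm
end
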